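/- Suppose in addition that singletons of S are measurable. If s₁, s₂ ∈ S satisfy φ(s₁) = φ(s₂), ξ({s₁}) > 0 and ξ({s₂}) > 0, then |V(s₁) − V(s₂)| ≤ (γ L_P/(1−γ)) · (ξ({s₁})⁻¹ + ξ({s₂})⁻¹). -/

import Mathlib

open MeasureTheory ProbabilityTheory

noncomputable def tvDist {X : Type*} [MeasurableSpace X] (μ ν : Measure X) : ℝ :=
  ⨆ A : {A : Set X // MeasurableSet A}, |(μ A.1).toReal - (ν A.1).toReal|

section Aux
variable {X : Type*} [MeasurableSpace X]

lemma tvDist_bddAbove (μ ν : Measure X) [IsFiniteMeasure μ] [IsFiniteMeasure ν] :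
    BddAbove (Set.range fun A : {A : Set X // MeasurableSet A} =>
      |(μ A.1).toReal - (ν A.1).toReal|) := by
  refine ⟨(μ Set.univ).toReal + (ν Set.univ).toReal, ?_⟩
  rintro x ⟨A, rfl⟩
  have h1 : (μ A.1).toReal ≤ (μ Set.univ).toReal :=
    ENNReal.toReal_mono (measure_ne_top _ _) (measure_mono (Set.subset_univ _))
  have h2 : (ν A.1).toReal ≤ (ν Set.univ).toReal :=
    ENNReal.toReal_mono (measure_ne_top _ _) (measure_mono (Set.subset_univ _))
  have := abs_sub (μ A.1).toReal (ν A.1).toReal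
  calc |(μ A.1).toReal - (ν A.1).toReal| ≤ |(μ A.1).toReal| + |(ν A.1).toReal| :=
        abs_sub _ _
    _ ≤ (μ Set.univ).toReal + (ν Set.univ).toReal := by
        rw [abs_of_nonneg ENNReal.toReal_nonneg, abs_of_nonneg ENNReal.toReal_nonneg]
        exact add_le_add h1 h2

lemma abs_le_tvDist (μ ν : Measure X) [IsFiniteMeasure μ] [IsFiniteMeasure ν]
    {A : Set X} (hA : MeasurableSet A) :
    |(μ A).toReal - (ν A).toReal| ≤ tvDist μ ν :=
  le_ciSup (tvDist_bddAbove μ ν) (⟨A, hA⟩ : {A : Set X // MeasurableSet A})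

lemma tvDist_nonneg (μ ν : Measure X) [IsFiniteMeasure μ] [IsFiniteMeasure ν] :
    0 ≤ tvDist μ ν := by
  have := abs_le_tvDist μ ν MeasurableSet.empty
  simpa using le_trans (abs_nonneg _) this

lemma tvDist_le_two (μ ν : Measure X) [IsProbabilityMeasure μ] [IsProbabilityMeasure ν] :
    tvDist μ ν ≤ 2 := by
  refine ciSup_le fun A => ?_
  have h1 : (μ A.1).toReal ≤ 1 := by
    have : μ A.1 ≤ 1 := prob_le_one
    simpa using ENNReal.toReal_mono (by simp) this
  have h2 : (ν A.1).toReal ≤ 1 := by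
    have : ν A.1 ≤ 1 := prob_le_one
    simpa using ENNReal.toReal_mono (by simp) this
  rw [abs_sub_le_iff]
  constructor <;> nlinarith [ENNReal.toReal_nonneg (a := μ A.1), ENNReal.toReal_nonneg (a := ν A.1)]

end Aux

section Fin
variable {X : Type*} [Fintype X] [MeasurableSpace X] [DiscreteMeasurableSpace X]

lemma measure_finset_toReal (μ : Measure X) [IsFiniteMeasure μ] (A : Finset X) :
    (μ (A : Set X)).toReal = ∑ x ∈ A, (μ {x}).toReal := by
  have h : (A : Set X) = ⋃ x ∈ A, {x} := by ext x; simp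
  rw [h, measure_biUnion_finset ?_ (fun x _ => MeasurableSet.singleton x)]
  · rw [ENNReal.toReal_sum (fun x _ => measure_ne_top _ _)]
  · intro x _ y _ hxy
    simp [Set.disjoint_singleton, hxy]

lemma sum_side_le_tvDist (μ ν : Measure X) [IsProbabilityMeasure μ] [IsProbabilityMeasure ν]
    (g : X → ℝ) (hg0 : ∀ x, 0 ≤ g x) (hg1 : ∀ x, g x ≤ 1) :
    ∑ x, ((μ {x}).toReal - (ν {x}).toReal) * g x ≤ tvDist μ ν := by
  classical
  set a : X → ℝ := fun x => (μ {x}).toReal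
  set b : X → ℝ := fun x => (ν {x}).toReal
  set A : Finset X := Finset.univ.filter (fun x => b x ≤ a x) with hA
  have hsplit : ∑ x, (a x - b x) * g x =
      ∑ x ∈ A, (a x - b x) * g x + ∑ x ∈ Aᶜ, (a x - b x) * g x :=
    (Finset.sum_add_sum_compl A _).symm
  have h1 : ∑ x ∈ A, (a x - b x) * g x ≤ ∑ x ∈ A, (a x - b x) := by
    refine Finset.sum_le_sum fun x hx => ?_
    have hab : 0 ≤ a x - b x := by
      simp only [hA, Finset.mem_filter] at hx; linarith [hx.2]
    nlinarith [hg0 x, hg1 x]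
  have h2 : ∑ x ∈ Aᶜ, (a x - b x) * g x ≤ 0 := by
    refine Finset.sum_nonpos fun x hx => ?_
    have : ¬ b x ≤ a x := by
      simp only [hA, Finset.mem_compl, Finset.mem_filter, Finset.mem_univ, true_and] at hx
      exact hx
    have hab : a x - b x ≤ 0 := by linarith [not_le.mp this]
    exact mul_nonpos_of_nonpos_of_nonneg hab (hg0 x)
  have h3 : ∑ x ∈ A, (a x - b x) = (μ (A : Set X)).toReal - (ν (A : Set X)).toReal := by
    rw [measure_finset_toReal μ A, measure_finset_toReal ν A, Finset.sum_sub_distrib]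
  have h4 : (μ (A : Set X)).toReal - (ν (A : Set X)).toReal ≤ tvDist μ ν :=
    le_trans (le_abs_self _) (abs_le_tvDist μ ν (MeasurableSet.of_discrete))
  linarith

lemma abs_integral_sub_le_tvDist (μ ν : Measure X)
    [IsProbabilityMeasure μ] [IsProbabilityMeasure ν]
    (g : X → ℝ) (hg0 : ∀ x, 0 ≤ g x) (hg1 : ∀ x, g x ≤ 1) :
    |∫ x, g x ∂μ - ∫ x, g x ∂ν| ≤ tvDist μ ν := by
  have hμ : ∫ x, g x ∂μ = ∑ x, (μ {x}).toReal * g x := by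
    rw [integral_fintype _]; simp [smul_eq_mul, Measure.real_def]; exact .of_finite
  have hν : ∫ x, g x ∂ν = ∑ x, (ν {x}).toReal * g x := by
    rw [integral_fintype _]; simp [smul_eq_mul, Measure.real_def]; exact .of_finite
  rw [hμ, hν, abs_le]
  have hsymm : tvDist ν μ = tvDist μ ν := by
    unfold tvDist; congr 1; funext A; rw [abs_sub_comm]
  constructor
  · have := sum_side_le_tvDist ν μ g hg0 hg1
    rw [hsymm] at this
    have heq : ∑ x, ((ν {x}).toReal - (μ {x}).toReal) * g x =
        -(∑ x, (μ {x}).toReal * g x - ∑ x, (ν {x}).toReal * g x) := by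
      rw [neg_sub, ← Finset.sum_sub_distrib]; congr 1; funext x; ring
    linarith [heq ▸ this]
  · have := sum_side_le_tvDist μ ν g hg0 hg1
    have heq : ∑ x, ((μ {x}).toReal - (ν {x}).toReal) * g x =
        ∑ x, (μ {x}).toReal * g x - ∑ x, (ν {x}).toReal * g x := by
      rw [← Finset.sum_sub_distrib]; congr 1; funext x; ring
    linarith [heq ▸ this]

end Fin
/-- Abstraction-quality bound for discounted reachability: two states with the same embedding
and positive stationary mass have reachability values within
`(γ·L_P/(1-γ))·(ξ{s₁}⁻¹ + ξ{s₂}⁻¹)` of each other. -/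
theorem value_closeness_reachability
    {S : Type*} [MeasurableSpace S] [MeasurableSingletonClass S]
    {Sb : Type*} [Fintype Sb] [Nonempty Sb] [MeasurableSpace Sb] [DiscreteMeasurableSpace Sb]
    (P : Kernel S S) [IsMarkovKernel P]
    (Pb : Sb → PMF Sb)
    (φ : S → Sb) (hφ : Measurable φ)
    (ξ : Measure S) [IsProbabilityMeasure ξ]
    (hinv : ∀ A : Set S, MeasurableSet A → ξ A = ∫⁻ s, P s A ∂ξ)
    (γ : ℝ) (hγ0 : 0 ≤ γ) (hγ1 : γ < 1)
    (Bb : Set Sb)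
    (V : S → ℝ) (hVmeas : Measurable V)
    (hV0 : ∀ s, 0 ≤ V s) (hV1 : ∀ s, V s ≤ 1)
    (hVtarget : ∀ s, φ s ∈ Bb → V s = 1)
    (hVbellman : ∀ s, φ s ∉ Bb → V s = γ * ∫ s', V s' ∂(P s))
    (Vb : Sb → ℝ) (hVb0 : ∀ x, 0 ≤ Vb x) (hVb1 : ∀ x, Vb x ≤ 1)
    (hVbtarget : ∀ x ∈ Bb, Vb x = 1)
    (hVbbellman : ∀ x, x ∉ Bb → Vb x = γ * ∑ y, ((Pb x) y).toReal * Vb y)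
    (s₁ s₂ : S) (hφeq : φ s₁ = φ s₂)
    (hs₁ : 0 < ξ {s₁}) (hs₂ : 0 < ξ {s₂}) :
    |V s₁ - V s₂| ≤
      (γ * (∫ s, tvDist ((P s).map φ) ((Pb (φ s)).toMeasure) ∂ξ) / (1 - γ)) *
        ((ξ {s₁}).toReal⁻¹ + (ξ {s₂}).toReal⁻¹) := by
  have h1γ : (0:ℝ) < 1 - γ := by linarith
  set ε : S → ℝ := fun s => tvDist ((P s).map φ) ((Pb (φ s)).toMeasure) with hε
  set W : S → ℝ := fun s => Vb (φ s) with hW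
  set f : S → ℝ := fun s => |V s - W s| with hf
  have hWmeas : Measurable W := Measurable.of_discrete.comp hφ
  have hfmeas : Measurable f := (hVmeas.sub hWmeas).abs
  have hf0 : ∀ s, 0 ≤ f s := fun s => abs_nonneg _
  have hf1 : ∀ s, f s ≤ 1 := by
    intro s
    rw [hf]
    have := hV0 s; have := hV1 s; have := hVb0 (φ s); have := hVb1 (φ s)
    rw [abs_le]; constructor <;> simp only [hW] <;> linarith
  -- probability measures instances
  have hmapprob : ∀ s : S, IsProbabilityMeasure ((P s).map φ) := fun s =>
    Measure.isProbabilityMeasure_map hφ.aemeasurable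
  have hε0 : ∀ s, 0 ≤ ε s := fun s => by
    have := hmapprob s; exact tvDist_nonneg _ _
  have hε2 : ∀ s, ε s ≤ 2 := fun s => by
    have := hmapprob s; exact tvDist_le_two _ _
  have hεmeas : Measurable ε := by
    simp only [hε, tvDist]
    refine Measurable.iSup fun A => ?_
    have h1 : Measurable fun s => (P s (φ ⁻¹' A.1)).toReal :=
      (P.measurable_coe (hφ A.2)).ennreal_toReal
    have h2 : Measurable fun s => (((Pb (φ s)).toMeasure) A.1).toReal :=
      (Measurable.of_discrete (f := fun x : Sb => ((Pb x).toMeasure A.1).toReal)).comp hφ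
    simp_rw [Measure.map_apply hφ A.2]
    exact (h1.sub h2).abs
  -- integrability helpers
  have hVInt : ∀ μ : Measure S, IsProbabilityMeasure μ → Integrable V μ := by
    intro μ hμ
    refine Integrable.mono' (integrable_const 1) hVmeas.aestronglyMeasurable ?_
    filter_upwards with s
    rw [Real.norm_eq_abs, abs_le]; exact ⟨by linarith [hV0 s], hV1 s⟩
  have hWInt : ∀ μ : Measure S, IsProbabilityMeasure μ → Integrable W μ := by
    intro μ hμ
    refine Integrable.mono' (integrable_const 1) hWmeas.aestronglyMeasurable ?_
    filter_upwards with s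
    rw [Real.norm_eq_abs, abs_le]
    exact ⟨by linarith [hVb0 (φ s)], hVb1 (φ s)⟩
  have hfInt : ∀ μ : Measure S, IsProbabilityMeasure μ → Integrable f μ := by
    intro μ hμ
    refine Integrable.mono' (integrable_const 1) hfmeas.aestronglyMeasurable ?_
    filter_upwards with s
    rw [Real.norm_eq_abs, abs_of_nonneg (hf0 s)]; exact hf1 s
  set g : S → ℝ := fun s => ∫ s', f s' ∂(P s) with hg
  have hg0 : ∀ s, 0 ≤ g s := fun s => integral_nonneg hf0
  have hg1 : ∀ s, g s ≤ 1 := by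
    intro s
    calc ∫ s', f s' ∂(P s) ≤ ∫ _, (1:ℝ) ∂(P s) :=
          integral_mono (hfInt _ inferInstance) (integrable_const 1) hf1
      _ = 1 := by simp
  -- key pointwise inequality
  have hkey : ∀ s, f s ≤ γ * ε s + γ * g s := by
    intro s
    by_cases hBb : φ s ∈ Bb
    · have : f s = 0 := by
        rw [hf]; simp only [hW, hVtarget s hBb, hVbtarget _ hBb, sub_self, abs_zero]
      rw [this]
      have := hε0 s; have := hg0 s
      positivity
    · have hVs := hVbellman s hBb
      have hWs : W s = γ * ∫ y, Vb y ∂((Pb (φ s)).toMeasure) := by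
        rw [hW]
        simp only [hVbbellman _ hBb, PMF.integral_eq_sum, smul_eq_mul]
      have hμprob := hmapprob s
      have hmap : ∫ s', W s' ∂(P s) = ∫ y, Vb y ∂((P s).map φ) :=
        (integral_map hφ.aemeasurable Measurable.of_discrete.aestronglyMeasurable).symm
      have hterm1 : |∫ s', V s' ∂(P s) - ∫ s', W s' ∂(P s)| ≤ g s := by
        rw [← integral_sub (hVInt _ inferInstance) (hWInt _ inferInstance)]
        calc |∫ s', (V s' - W s') ∂(P s)| = ‖∫ s', (V s' - W s') ∂(P s)‖ :=
              (Real.norm_eq_abs _).symm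
          _ ≤ ∫ s', ‖V s' - W s'‖ ∂(P s) := norm_integral_le_integral_norm _
          _ = g s := by simp only [hg, hf, Real.norm_eq_abs]
      have hterm2 : |∫ y, Vb y ∂((P s).map φ) - ∫ y, Vb y ∂((Pb (φ s)).toMeasure)| ≤ ε s :=
        abs_integral_sub_le_tvDist _ _ Vb hVb0 hVb1
      calc f s = γ * |∫ s', V s' ∂(P s) - ∫ y, Vb y ∂((Pb (φ s)).toMeasure)| := by
            show |V s - W s| = _
            rw [hVs, hWs, ← mul_sub, abs_mul, abs_of_nonneg hγ0]
        _ ≤ γ * (|∫ s', V s' ∂(P s) - ∫ s', W s' ∂(P s)|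
              + |∫ y, Vb y ∂((P s).map φ) - ∫ y, Vb y ∂((Pb (φ s)).toMeasure)|) := by
            refine mul_le_mul_of_nonneg_left ?_ hγ0
            rw [hmap]
            exact abs_sub_le _ _ _
        _ ≤ γ * (g s + ε s) := mul_le_mul_of_nonneg_left (add_le_add hterm1 hterm2) hγ0
        _ = γ * ε s + γ * g s := by ring
  -- step B : ∫ g dξ = ∫ f dξ
  set F : S → ENNReal := fun s => ENNReal.ofReal (f s) with hF
  have hFmeas : Measurable F := hfmeas.ennreal_ofReal
  have hFle1 : ∀ s, F s ≤ 1 := fun s => by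
    rw [hF]; simpa using ENNReal.ofReal_le_ofReal (hf1 s)
  have hFlint_le : ∀ μ : Measure S, IsProbabilityMeasure μ → ∫⁻ s, F s ∂μ ≤ 1 := by
    intro μ hμ
    calc ∫⁻ s, F s ∂μ ≤ ∫⁻ _, 1 ∂μ := lintegral_mono hFle1
      _ = 1 := by simp
  have hbind : ξ.bind (fun s => P s) = ξ := by
    refine Measure.ext fun A hA => ?_
    rw [Measure.bind_apply hA P.measurable.aemeasurable]
    exact (hinv A hA).symm
  have hlb : ∫⁻ s, F s ∂ξ = ∫⁻ s, ∫⁻ s', F s' ∂(P s) ∂ξ := by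
    conv_lhs => rw [← hbind]
    exact Measure.lintegral_bind P.measurable.aemeasurable hFmeas.aemeasurable
  have hfint : ∫ s, f s ∂ξ = (∫⁻ s, F s ∂ξ).toReal := by
    rw [integral_eq_lintegral_of_nonneg_ae (Filter.Eventually.of_forall hf0)
      hfmeas.aestronglyMeasurable]
  have hgeq : ∀ s, g s = (∫⁻ s', F s' ∂(P s)).toReal := by
    intro s
    show ∫ s', f s' ∂(P s) = _
    rw [integral_eq_lintegral_of_nonneg_ae (Filter.Eventually.of_forall hf0)
      hfmeas.aestronglyMeasurable]
  have hgmeas : Measurable g := by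
    rw [show g = fun s => (∫⁻ s', F s' ∂(P s)).toReal from funext hgeq]
    exact (Measurable.lintegral_kernel hFmeas).ennreal_toReal
  have hgint : ∫ s, g s ∂ξ = ∫ s, f s ∂ξ := by
    have : ∫ s, g s ∂ξ = (∫⁻ s, ENNReal.ofReal (g s) ∂ξ).toReal := by
      rw [integral_eq_lintegral_of_nonneg_ae (Filter.Eventually.of_forall hg0)
        hgmeas.aestronglyMeasurable]
    rw [this, hfint, hlb]
    congr 1
    refine lintegral_congr fun s => ?_
    rw [hgeq s, ENNReal.ofReal_toReal]
    exact ne_of_lt (lt_of_le_of_lt (hFlint_le _ inferInstance) ENNReal.one_lt_top)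
  -- integrate hkey
  have hεint : Integrable ε ξ := by
    refine Integrable.mono' (integrable_const 2) hεmeas.aestronglyMeasurable ?_
    filter_upwards with s
    rw [Real.norm_eq_abs, abs_of_nonneg (hε0 s)]; exact hε2 s
  have hgInt : Integrable g ξ := by
    refine Integrable.mono' (integrable_const 1) hgmeas.aestronglyMeasurable ?_
    filter_upwards with s
    rw [Real.norm_eq_abs, abs_of_nonneg (hg0 s)]; exact hg1 s
  set L : ℝ := ∫ s, ε s ∂ξ with hL
  set D : ℝ := ∫ s, f s ∂ξ with hD
  have hL0 : 0 ≤ L := integral_nonneg hε0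
  have hD0 : 0 ≤ D := integral_nonneg hf0
  have hDineq : D ≤ γ * L + γ * D := by
    calc D ≤ ∫ s, (γ * ε s + γ * g s) ∂ξ :=
          integral_mono (hfInt _ inferInstance)
            ((hεint.const_mul γ).add (hgInt.const_mul γ)) hkey
      _ = γ * L + γ * D := by
          rw [integral_add (hεint.const_mul γ) (hgInt.const_mul γ),
            integral_const_mul, integral_const_mul, hgint]
  have hDle : D ≤ γ * L / (1 - γ) := by
    rw [le_div_iff₀ h1γ]; nlinarith
  -- atom bounds
  have hatom : ∀ s : S, 0 < ξ {s} → f s ≤ D * (ξ {s}).toReal⁻¹ := by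
    intro s hs
    have hc : (0:ℝ) < (ξ {s}).toReal :=
      ENNReal.toReal_pos (ne_of_gt hs) (measure_ne_top _ _)
    have hset : (ξ {s}).toReal * f s ≤ D := by
      have h1 : ∫ x in {s}, f x ∂ξ = (ξ {s}).toReal • f s := integral_singleton f s
      have h2 : ∫ x in {s}, f x ∂ξ ≤ D :=
        setIntegral_le_integral (hfInt _ inferInstance) (Filter.Eventually.of_forall hf0)
      rw [h1, smul_eq_mul] at h2; exact h2
    calc f s = ((ξ {s}).toReal * f s) * (ξ {s}).toReal⁻¹ := by field_simp
      _ ≤ D * (ξ {s}).toReal⁻¹ := mul_le_mul_of_nonneg_right hset (by positivity)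
  have htri : |V s₁ - V s₂| ≤ f s₁ + f s₂ := by
    have hW12 : W s₁ = W s₂ := by rw [hW]; simp [hφeq]
    calc |V s₁ - V s₂| = |(V s₁ - W s₁) - (V s₂ - W s₂)| := by rw [hW12]; ring_nf
      _ ≤ |V s₁ - W s₁| + |V s₂ - W s₂| := abs_sub _ _
      _ = f s₁ + f s₂ := rfl
  have hsum : f s₁ + f s₂ ≤ D * ((ξ {s₁}).toReal⁻¹ + (ξ {s₂}).toReal⁻¹) := by
    rw [mul_add]
    exact add_le_add (hatom s₁ hs₁) (hatom s₂ hs₂)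
  have hpos : 0 ≤ (ξ {s₁}).toReal⁻¹ + (ξ {s₂}).toReal⁻¹ := by positivity
  calc |V s₁ - V s₂| ≤ f s₁ + f s₂ := htri
    _ ≤ D * ((ξ {s₁}).toReal⁻¹ + (ξ {s₂}).toReal⁻¹) := hsum
    _ ≤ (γ * L / (1 - γ)) * ((ξ {s₁}).toReal⁻¹ + (ξ {s₂}).toReal⁻¹) :=
        mul_le_mul_of_nonneg_right hDle hpos
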